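/- arXiv:2004.14063 — 9 statements merged into one kernel-verified Lean document; each statement's English description precedes it below -/
import Mathlib

section
/- Let δ be an expansion function on L, φ : L → L a function with φ(a) ≤ a for all a ∈ L, and q ∈ L a proper element. Then the following statements are equivalent: (1) q is φ-δ-primary; (2) for every a ∈ L with a ≰ δ(q), either (q : a) = q or (q : a) = (φ(q) : a); (3) for all compact elements r, s ∈ L, r·s ≤ q and r·s ≰ φ(q) imply s ≤ q or r ≤ δ(q). -/
open CompleteLattice

variable {L : Type*} [CompleteLattice L] [CommMonoid L]

/-- `L` is a compactly generated multiplicative lattice: multiplication distributes over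
arbitrary joins, the top element is the multiplicative identity, `1` is a compact element,
every element is a join of compact elements, and products of compact elements are compact. -/
def IsCGMultLattice (L : Type*) [CompleteLattice L] [CommMonoid L] : Prop :=
  (∀ (a : L) (S : Set L), a * sSup S = ⨆ b ∈ S, a * b) ∧
  ((1 : L) = ⊤) ∧
  IsCompactElement (1 : L) ∧
  (∀ a : L, a = sSup {x : L | IsCompactElement x ∧ x ≤ a}) ∧
  (∀ x y : L, IsCompactElement x → IsCompactElement y →
    IsCompactElement (x * y))

/-- An expansion function on `L`: `a ≤ δ a` and `δ` is monotone. -/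
def IsExpansion (δ : L → L) : Prop :=
  (∀ a : L, a ≤ δ a) ∧ ∀ a b : L, a ≤ b → δ a ≤ δ b

/-- A proper element `p` is `φ`-`δ`-primary if `a*b ≤ p` and `a*b ≰ φ p` imply
`a ≤ p` or `b ≤ δ p`. -/
def IsPhiDeltaPrimary (φ δ : L → L) (p : L) : Prop :=
  p < 1 ∧ ∀ a b : L, a * b ≤ p → ¬ a * b ≤ φ p → a ≤ p ∨ b ≤ δ p

/-- A proper element `p` is `δ`-primary if `a*b ≤ p` implies `a ≤ p` or `b ≤ δ p`. -/
def IsDeltaPrimary (δ : L → L) (p : L) : Prop :=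
  p < 1 ∧ ∀ a b : L, a * b ≤ p → a ≤ p ∨ b ≤ δ p

/-- A proper element `p` is `φ`-prime if `a*b ≤ p` and `a*b ≰ φ p` imply
`a ≤ p` or `b ≤ p`. -/
def IsPhiPrime (φ : L → L) (p : L) : Prop :=
  p < 1 ∧ ∀ a b : L, a * b ≤ p → ¬ a * b ≤ φ p → a ≤ p ∨ b ≤ p

/-- The residual `(a : b)`, the join of all `x` with `x * b ≤ a`. -/
def lres (a b : L) : L := sSup {x : L | x * b ≤ a}

/-- The radical `√a`, the join of all compact `x` with `x ^ n ≤ a` for some `n ≥ 1`. -/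
def lradical (a : L) : L :=
  sSup {x : L | IsCompactElement x ∧ ∃ n : ℕ, 0 < n ∧ x ^ n ≤ a}

/-- A principal element of a multiplicative lattice. -/
def IsPrincipalElem (e : L) : Prop :=
  ∀ a b : L, a ⊓ b * e = (lres a e ⊓ b) * e ∧ lres (a * e ⊔ b) e = lres b e ⊔ a

/-- A Noether lattice: modular, principally generated, satisfying the ascending
chain condition. -/
def IsNoetherLattice (L : Type*) [CompleteLattice L] [CommMonoid L] : Prop :=
  IsModularLattice L ∧ (∀ a : L, a = sSup {e : L | IsPrincipalElem e ∧ e ≤ a}) ∧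
  WellFoundedGT L

/-- A maximal element: proper, and `m < x ≤ 1` implies `x = 1`. -/
def IsMaximalElem (m : L) : Prop :=
  m < 1 ∧ ∀ x : L, m < x → x ≤ 1 → x = 1

set_option linter.unusedSectionVars false in
theorem aux_compact_sup {x y : L} (hx : IsCompactElement x)
    (hy : IsCompactElement y) :
    IsCompactElement (x ⊔ y) := by
  classical
  have := CompleteLattice.isCompactElement_finsetSup (f := (id : L → L)) ({x, y} : Finset L)
    (by intro z hz; simp at hz; rcases hz with h | h <;> subst h <;> assumption)
  simpa using this

theorem phiDeltaPrimary_characterizations (hL : IsCGMultLattice L)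
    (δ φ : L → L) (hδ : IsExpansion δ) (hφ : ∀ a : L, φ a ≤ a)
    (q : L) (hq : q < 1) :
    (IsPhiDeltaPrimary φ δ q ↔
      ∀ a : L, ¬ a ≤ δ q → lres q a = q ∨ lres q a = lres (φ q) a) ∧
    (IsPhiDeltaPrimary φ δ q ↔
      ∀ r s : L, IsCompactElement r → IsCompactElement s →
        r * s ≤ q → ¬ r * s ≤ φ q → s ≤ q ∨ r ≤ δ q) := by
  obtain ⟨hdist, hone, _hc1, hgen, hmc⟩ := hL
  -- multiplication is monotone in the right argument
  have hmono : ∀ a b c : L, b ≤ c → a * b ≤ a * c := by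
    intro a b c h
    have h2 : a * c = a * b ⊔ a * c := by
      have hc : sSup ({b, c} : Set L) = c := by
        rw [sSup_pair]; exact sup_eq_right.mpr h
      calc a * c = a * sSup ({b, c} : Set L) := by rw [hc]
        _ = ⨆ x ∈ ({b, c} : Set L), a * x := hdist a _
        _ = a * b ⊔ a * c := by rw [iSup_pair]
    rw [h2]; exact le_sup_left
  have hmono' : ∀ a b c : L, b ≤ c → b * a ≤ c * a := by
    intro a b c h
    rw [mul_comm b a, mul_comm c a]; exact hmono a b c h
  have hle_one : ∀ a : L, a ≤ 1 := fun a => hone ▸ le_top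
  have hmul_le_left : ∀ a b : L, a * b ≤ a := by
    intro a b
    calc a * b ≤ a * 1 := hmono a b 1 (hle_one b)
      _ = a := mul_one a
  -- (lres a b) * b ≤ a
  have hres : ∀ a b : L, lres a b * b ≤ a := by
    intro a b
    rw [mul_comm, lres, hdist]
    exact iSup_le fun x => iSup_le fun hx => by rw [mul_comm]; exact hx
  have hsupmul : ∀ x y a : L, (x ⊔ y) * a = x * a ⊔ y * a := by
    intro x y a
    rw [mul_comm, ← sSup_pair, hdist, iSup_pair, mul_comm a x, mul_comm a y]
  constructor
  · -- first characterization
    constructor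
    · intro hp a ha
      by_cases h : lres q a ≤ q
      · left
        exact le_antisymm h (le_sSup (hmul_le_left q a))
      · right
        obtain ⟨x, hxq, hx⟩ : ∃ x, x * a ≤ q ∧ ¬ x ≤ q := by
          by_contra hc
          push_neg at hc
          exact h (sSup_le fun x hx => hc x hx)
        refine le_antisymm (sSup_le fun y hy => ?_)
          (sSup_le fun y hy => le_sSup (le_trans hy (hφ q)))
        -- hy : y * a ≤ q; show y ≤ lres (φ q) a
        have hxy : (x ⊔ y) * a ≤ q := by rw [hsupmul]; exact sup_le hxq hy
        have hxynot : ¬ x ⊔ y ≤ q := fun hle => hx (le_trans le_sup_left hle)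
        have : (x ⊔ y) * a ≤ φ q := by
          by_contra hc
          rcases hp.2 (x ⊔ y) a hxy hc with h1 | h1
          · exact hxynot h1
          · exact ha h1
        exact le_sSup (le_trans (hmono' a y (x ⊔ y) le_sup_right) this)
    · intro h
      refine ⟨hq, fun a b hab hnab => ?_⟩
      by_cases hb : b ≤ δ q
      · exact Or.inr hb
      left
      rcases h b hb with h1 | h1
      · rw [← h1]; exact le_sSup hab
      · exfalso
        have : a ≤ lres (φ q) b := by rw [← h1]; exact le_sSup hab
        exact hnab (le_trans (hmono' b a _ this) (hres (φ q) b))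
  · -- second characterization
    constructor
    · intro hp r s _ _ hrs hnrs
      exact hp.2 s r (by rwa [mul_comm]) (by rwa [mul_comm])
    · intro h
      refine ⟨hq, fun a b hab hnab => ?_⟩
      by_cases hb : b ≤ δ q
      · exact Or.inr hb
      left
      -- find a compact r1 ≤ b with r1 ≰ δ q
      obtain ⟨r1, ⟨hr1c, hr1b⟩, hr1⟩ :
          ∃ r1 ∈ {x : L | IsCompactElement x ∧ x ≤ b}, ¬ r1 ≤ δ q := by
        by_contra hc
        push_neg at hc
        exact hb (by conv_lhs => rw [hgen b]
                     exact sSup_le fun x hx => hc x hx)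
      -- find compacts s0 ≤ a, r0 ≤ b with s0 * r0 ≰ φ q
      obtain ⟨s0, hs0c, hs0a, r0, hr0c, hr0b, h0⟩ :
          ∃ s0, IsCompactElement s0 ∧ s0 ≤ a ∧
            ∃ r0, IsCompactElement r0 ∧ r0 ≤ b ∧ ¬ s0 * r0 ≤ φ q := by
        by_contra hc
        push_neg at hc
        apply hnab
        calc a * b = a * sSup {x : L | IsCompactElement x ∧ x ≤ b} := by
              rw [← hgen b]
          _ = ⨆ r ∈ {x : L | IsCompactElement x ∧ x ≤ b}, a * r := hdist a _
          _ ≤ φ q := by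
            refine iSup_le fun r => iSup_le fun hr => ?_
            calc a * r = sSup {x : L | IsCompactElement x ∧ x ≤ a} * r := by
                  rw [← hgen a]
              _ = r * sSup {x : L | IsCompactElement x ∧ x ≤ a} := by
                  rw [mul_comm]
              _ = ⨆ s ∈ {x : L | IsCompactElement x ∧ x ≤ a}, r * s := hdist r _
              _ ≤ φ q := iSup_le fun s => iSup_le fun hs => by
                  rw [mul_comm]; exact hc s hs.1 hs.2 r hr.1 hr.2
      -- now show a ≤ q
      conv_lhs => rw [hgen a]
      refine sSup_le fun s hs => ?_
      obtain ⟨hsc, hsa⟩ := hs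
      set r : L := r0 ⊔ r1 with hr_def
      set s' : L := s ⊔ s0 with hs'_def
      have hrc : IsCompactElement r := aux_compact_sup hr0c hr1c
      have hs'c : IsCompactElement s' := aux_compact_sup hsc hs0c
      have hrb : r ≤ b := sup_le hr0b hr1b
      have hs'a : s' ≤ a := sup_le hsa hs0a
      have h1 : r * s' ≤ q := by
        calc r * s' ≤ b * s' := hmono' s' r b hrb
          _ = s' * b := mul_comm _ _
          _ ≤ a * b := hmono' b s' a hs'a
          _ ≤ q := hab
      have h2 : ¬ r * s' ≤ φ q := by
        intro hc
        apply h0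
        calc s0 * r0 ≤ s0 * r := hmono s0 r0 r le_sup_left
          _ ≤ s' * r := hmono' r s0 s' le_sup_right
          _ = r * s' := mul_comm _ _
          _ ≤ φ q := hc
      rcases h r s' hrc hs'c h1 h2 with h3 | h3
      · exact le_trans le_sup_left h3
      · exact absurd (le_trans le_sup_right h3) hr1
end

section
/- Let δ be an expansion function on L and φ : L → L a function with φ(a) ≤ a for all a ∈ L. A proper element q ∈ L is φ-δ-primary if and only if for every a ∈ L with a ≰ q, either (q : a) ≤ δ(q) or (q : a) = (φ(q) : a). -/
open CompleteLattice

variable {L : Type*} [CompleteLattice L] [CommMonoid L]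

lemma mul_sup_eq (hL : IsCGMultLattice L) (a x y : L) : a * (x ⊔ y) = a * x ⊔ a * y := by
  have h := hL.1 a {x, y}
  rw [sSup_pair] at h
  rw [h, iSup_pair]

lemma mul_le_mul_right_cg (hL : IsCGMultLattice L) {b c : L} (h : b ≤ c) (a : L) :
    b * a ≤ c * a := by
  have : c * a = b * a ⊔ c * a := by
    rw [mul_comm b a, mul_comm c a, ← mul_sup_eq hL a b c, sup_eq_right.mpr h]
  rw [this]; exact le_sup_left

lemma lres_mul_le (hL : IsCGMultLattice L) (c a : L) : lres c a * a ≤ c := by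
  rw [mul_comm, lres, hL.1]
  exact iSup₂_le fun x hx => by rw [mul_comm]; exact hx

theorem phiDeltaPrimary_iff_residual (hL : IsCGMultLattice L)
    (δ φ : L → L) (hδ : IsExpansion δ) (hφ : ∀ a : L, φ a ≤ a)
    (q : L) (hq : q < 1) :
    IsPhiDeltaPrimary φ δ q ↔
      ∀ a : L, ¬ a ≤ q → lres q a ≤ δ q ∨ lres q a = lres (φ q) a := by
  constructor
  · rintro ⟨-, hp⟩ a ha
    by_cases hd : lres q a ≤ δ q
    · exact Or.inl hd
    · right
      obtain ⟨x0, hx0, hx0d⟩ : ∃ x ∈ {x : L | x * a ≤ q}, ¬ x ≤ δ q := by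
        by_contra h
        push_neg at h
        exact hd (_root_.sSup_le h)
      apply le_antisymm
      · apply _root_.sSup_le
        intro x hx
        apply _root_.le_sSup
        have hmul : a * (x ⊔ x0) ≤ q := by
          rw [mul_sup_eq hL, mul_comm a x, mul_comm a x0]
          exact sup_le hx hx0
        have : a * (x ⊔ x0) ≤ φ q := by
          by_contra hc
          rcases hp a (x ⊔ x0) hmul hc with h | h
          · exact ha h
          · exact hx0d (le_trans le_sup_right h)
        calc x * a = a * x := mul_comm x a
          _ ≤ a * (x ⊔ x0) := by rw [mul_sup_eq hL]; exact le_sup_left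
          _ ≤ φ q := this
      · exact _root_.sSup_le fun x hx => _root_.le_sSup (le_trans hx (hφ q))
  · intro h
    refine ⟨hq, fun a b hab hnab => ?_⟩
    by_cases ha : a ≤ q
    · exact Or.inl ha
    · rcases h a ha with hd | he
      · right
        have hb : b ≤ lres q a := _root_.le_sSup (show b * a ≤ q by rw [mul_comm]; exact hab)
        exact le_trans hb hd
      · exfalso
        have hb : b ≤ lres (φ q) a := he ▸ _root_.le_sSup (show b * a ≤ q by rw [mul_comm]; exact hab)
        have : b * a ≤ φ q := le_trans (mul_le_mul_right_cg hL hb a) (lres_mul_le hL (φ q) a)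
        rw [mul_comm] at this
        exact hnab this
end

section
/- Suppose L is additionally a Noether lattice. Let q ∈ L be a proper element with q ≠ 0 which is non-nilpotent (qⁿ ≠ 0 for all positive integers n) and which satisfies the restricted cancellation law (for all b, c ∈ L, q·b = q·c ≠ 0 implies b = c). Let δ be an expansion function on L and let φ : L → L be a function with φ(a) ≤ a for all a ∈ L and φ(a) ≤ aⁿ for all a ∈ L and all integers n ≥ 2. Then q is φ-δ-primary if and only if q is δ-primary. -/
open CompleteLattice

variable {L : Type*} [CompleteLattice L] [CommMonoid L]

theorem restricted_cancellation_phi_iff_delta (hL : IsCGMultLattice L)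
    (hN : IsNoetherLattice L) (q : L) (hq : q < 1) (hq0 : q ≠ ⊥)
    (hnil : ∀ n : ℕ, 0 < n → q ^ n ≠ ⊥)
    (hcancel : ∀ b c : L, q * b = q * c → q * b ≠ ⊥ → b = c)
    (δ : L → L) (hδ : IsExpansion δ)
    (φ : L → L) (hφ : ∀ a : L, φ a ≤ a)
    (hφn : ∀ (a : L) (n : ℕ), 2 ≤ n → φ a ≤ a ^ n) :
    IsPhiDeltaPrimary φ δ q ↔ IsDeltaPrimary δ q := by
  -- multiplication distributes over binary sups
  have hdist : ∀ a x y : L, a * (x ⊔ y) = a * x ⊔ a * y := by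
    intro a x y
    have := hL.1 a {x, y}
    simpa [sSup_pair, iSup_or, iSup_sup_eq, iSup_iSup_eq_left, iSup_iSup_eq_right] using this
  have hmono : ∀ a x y : L, x ≤ y → a * x ≤ a * y := by
    intro a x y hxy
    have : a * y = a * x ⊔ a * y := by
      rw [← hdist]; congr 1; exact (sup_eq_right.2 hxy).symm
    rw [this]; exact le_sup_left
  have hle_one : ∀ a : L, a ≤ 1 := fun a => hL.2.1 ▸ le_top
  have hmul_le : ∀ a : L, a * q ≤ q := fun a => by
    have := hmono q a 1 (hle_one a)
    simpa [mul_comm] using this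
  constructor
  · rintro ⟨hq1, H⟩
    refine ⟨hq1, fun a b hab => ?_⟩
    by_cases h1 : a * b ≤ φ q
    · by_cases h2 : a * (b ⊔ q) ≤ φ q
      · -- then a * q ≤ φ q ≤ q ^ 3, cancellation gives a ≤ q² ≤ q
        have haq : a * q ≤ q ^ 3 := by
          have : a * q ≤ a * (b ⊔ q) := hmono a q (b ⊔ q) le_sup_right
          exact this.trans (h2.trans (hφn q 3 (by norm_num)))
        have hq3 : q * (a ⊔ q ^ 2) = q * q ^ 2 := by
          rw [hdist]
          have h1' : q * a ≤ q * q ^ 2 := by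
            rw [mul_comm q a]
            calc a * q ≤ q ^ 3 := haq
            _ = q * q ^ 2 := (pow_succ q 2).trans (mul_comm _ _)
          exact sup_eq_right.2 h1'
        have hne : q * (a ⊔ q ^ 2) ≠ ⊥ := by
          rw [hq3]
          have : q * q ^ 2 = q ^ 3 := ((pow_succ q 2).trans (mul_comm _ _)).symm
          rw [this]; exact hnil 3 (by norm_num)
        have := hcancel (a ⊔ q ^ 2) (q ^ 2) hq3 hne
        have ha : a ≤ q ^ 2 := by rw [← this]; exact le_sup_left
        have hq2 : (q : L) ^ 2 ≤ q := by
          have := hmul_le q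
          calc (q : L) ^ 2 = q * q := sq q
          _ ≤ q := this
        exact Or.inl (ha.trans hq2)
      · have hle : a * (b ⊔ q) ≤ q := by
          rw [hdist]
          exact sup_le hab (hmul_le a)
        rcases H a (b ⊔ q) hle h2 with h | h
        · exact Or.inl h
        · exact Or.inr (le_sup_left.trans h)
    · exact H a b hab h1
  · rintro ⟨hq1, H⟩
    exact ⟨hq1, fun a b hab _ => H a b hab⟩
end

section
/- Let δ be an expansion function on L, let n ≥ 2 and 2 ≤ k ≤ n be integers, and let q ∈ L be a proper element which is k-potent δ-primary, i.e. for all a, b ∈ L, a·b ≤ q^k implies a ≤ q or b ≤ δ(q). Let φ : L → L be a function with φ(a) ≤ a and φ(a) ≤ aⁿ for all a ∈ L. Then q is φ-δ-primary if and only if q is δ-primary. -/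
open CompleteLattice

variable {L : Type*} [CompleteLattice L] [CommMonoid L]

theorem kPotent_phi_iff_delta (hL : IsCGMultLattice L)
    (δ : L → L) (hδ : IsExpansion δ) (n k : ℕ) (hn : 2 ≤ n) (hk : 2 ≤ k)
    (hkn : k ≤ n) (q : L) (hq : q < 1)
    (hkpot : ∀ a b : L, a * b ≤ q ^ k → a ≤ q ∨ b ≤ δ q)
    (φ : L → L) (hφ : ∀ a : L, φ a ≤ a) (hφn : ∀ a : L, φ a ≤ a ^ n) :
    IsPhiDeltaPrimary φ δ q ↔ IsDeltaPrimary δ q := by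
  have hmono : ∀ a b c : L, b ≤ c → a * b ≤ a * c := by
    intro a b c hbc
    have h := hL.1 a {b, c}
    have hs : sSup ({b, c} : Set L) = c := by
      rw [sSup_pair, sup_eq_right.mpr hbc]
    rw [hs] at h
    have h2 : (⨆ x ∈ ({b, c} : Set L), a * x) = a * b ⊔ a * c := by
      exact iSup_pair
    rw [h2] at h
    rw [h]
    exact le_sup_left
  have hnk : q ^ n ≤ q ^ k := by
    have : q ^ n = q ^ k * q ^ (n - k) := by
      rw [← pow_add]
      congr 1
      omega
    rw [this]
    have : q ^ k * q ^ (n - k) ≤ q ^ k * 1 := by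
      apply hmono
      rw [hL.2.1]
      exact le_top
    simpa using this
  constructor
  · rintro ⟨_, hp⟩
    refine ⟨hq, fun a b hab => ?_⟩
    by_cases h : a * b ≤ φ q
    · exact hkpot a b (h.trans ((hφn q).trans hnk))
    · exact hp a b hab h
  · rintro ⟨_, hp⟩
    exact ⟨hq, fun a b hab _ => hp a b hab⟩
end

section
/- Let δ be an expansion function on L and φ : L → L a function with φ(a) ≤ a for all a ∈ L. If a proper element q ∈ L is φ-δ-primary and q² ≰ φ(q), then q is δ-primary. -/
open CompleteLattice

variable {L : Type*} [CompleteLattice L] [CommMonoid L]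

theorem sq_not_le_phi_implies_delta_primary (hL : IsCGMultLattice L)
    (δ φ : L → L) (hδ : IsExpansion δ) (hφ : ∀ a : L, φ a ≤ a)
    (q : L) (hq : IsPhiDeltaPrimary φ δ q) (hsq : ¬ q ^ 2 ≤ φ q) :
    IsDeltaPrimary δ q := by
  obtain ⟨hdist, hone, -, -, -⟩ := hL
  obtain ⟨hq1, hqp⟩ := hq
  have hmul_sup : ∀ c x y : L, c * (x ⊔ y) = c * x ⊔ c * y := by
    intro c x y
    have h := hdist c {x, y}
    simpa [sSup_pair, iSup_or, iSup_sup_eq] using h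
  have hmono : ∀ x y c : L, x ≤ y → c * x ≤ c * y := by
    intro x y c hxy
    have : c * y = c * x ⊔ c * y := by rw [← hmul_sup, sup_eq_right.mpr hxy]
    rw [this]; exact le_sup_left
  have hle_one : ∀ x : L, x ≤ 1 := fun x => hone ▸ le_top
  have hmulq : ∀ x : L, x * q ≤ q := by
    intro x
    calc x * q = q * x := mul_comm _ _
    _ ≤ q * 1 := hmono _ _ _ (hle_one x)
    _ = q := mul_one q
  refine ⟨hq1, fun a b hab => ?_⟩
  by_cases hφab : a * b ≤ φ q
  · have key : (a ⊔ q) * (b ⊔ q) ≤ q := by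
      rw [hmul_sup, mul_comm _ b, mul_comm _ q, hmul_sup, hmul_sup]
      refine sup_le (sup_le ?_ ?_) (sup_le ?_ ?_)
      · exact mul_comm b a ▸ hab
      · exact hmulq b
      · exact mul_comm q a ▸ hmulq a
      · exact hmulq q
    have hsqle : q ^ 2 ≤ (a ⊔ q) * (b ⊔ q) := by
      rw [sq]
      calc q * q ≤ q * (b ⊔ q) := hmono _ _ _ le_sup_right
      _ = (b ⊔ q) * q := mul_comm _ _
      _ ≤ (b ⊔ q) * (a ⊔ q) := hmono _ _ _ le_sup_right
      _ = (a ⊔ q) * (b ⊔ q) := mul_comm _ _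
    have hnot : ¬ (a ⊔ q) * (b ⊔ q) ≤ φ q := fun h => hsq (hsqle.trans h)
    rcases hqp _ _ key hnot with h | h
    · exact Or.inl (le_sup_left.trans h)
    · exact Or.inr (le_sup_left.trans h)
  · exact hqp a b hab hφab
end

section
/- Let δ be an expansion function on L and φ : L → L a function with φ(a) ≤ a for all a ∈ L. If a proper element q ∈ L is φ-δ-primary but not δ-primary, then √q = √(φ(q)). -/
open CompleteLattice

variable {L : Type*} [CompleteLattice L] [CommMonoid L]

theorem radical_eq_radical_phi (hL : IsCGMultLattice L)
    (δ φ : L → L) (hδ : IsExpansion δ) (hφ : ∀ a : L, φ a ≤ a)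
    (q : L) (hq : IsPhiDeltaPrimary φ δ q) (hnd : ¬ IsDeltaPrimary δ q) :
    lradical q = lradical (φ q) := by
  -- multiplication is monotone
  have hmono : ∀ a b c : L, b ≤ c → a * b ≤ a * c := by
    intro a b c h
    have hac : a * c = a * b ⊔ a * c := by
      conv_lhs => rw [show c = b ⊔ c from (sup_eq_right.mpr h).symm]
      rw [← sSup_pair, hL.1, iSup_pair]
    rw [hac]; exact le_sup_left
  have hmono2 : ∀ a b c d : L, a ≤ b → c ≤ d → a * c ≤ b * d := by
    intro a b c d h1 h2
    calc a * c ≤ a * d := hmono a c d h2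
      _ = d * a := mul_comm a d
      _ ≤ d * b := hmono d a b h1
      _ = b * d := mul_comm d b
  -- extract witnesses of non-δ-primariness
  have hdist : ∀ x y z : L, x * (y ⊔ z) = x * y ⊔ x * z := by
    intro x y z; rw [← sSup_pair, hL.1, iSup_pair]
  have hw : ¬ ∀ a b : L, a * b ≤ q → a ≤ q ∨ b ≤ δ q := fun h => hnd ⟨hq.1, h⟩
  push_neg at hw
  obtain ⟨a, b, hab, ha, hb⟩ := hw
  -- key: q * q ≤ φ q
  have hkey : q * q ≤ φ q := by
    have hsup : (a ⊔ q) * (b ⊔ q) ≤ q := by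
      have h1 : a * b ≤ q := hab
      have h2 : a * q ≤ q := by
        calc a * q ≤ 1 * q := hmono2 a 1 q q (hL.2.1 ▸ le_top) le_rfl
          _ = q := one_mul q
      have h3 : q * b ≤ q := by
        calc q * b ≤ q * 1 := hmono2 q q b 1 le_rfl (hL.2.1 ▸ le_top)
          _ = q := mul_one q
      have h4 : q * q ≤ q := by
        calc q * q ≤ q * 1 := hmono2 q q q 1 le_rfl (hL.2.1 ▸ le_top)
          _ = q := mul_one q
      have : (a ⊔ q) * (b ⊔ q) = (a * b ⊔ a * q) ⊔ (q * b ⊔ q * q) := by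
        calc (a ⊔ q) * (b ⊔ q) = (a ⊔ q) * b ⊔ (a ⊔ q) * q := hdist _ _ _
          _ = b * (a ⊔ q) ⊔ q * (a ⊔ q) := by rw [mul_comm (a ⊔ q) b, mul_comm (a ⊔ q) q]
          _ = (b * a ⊔ b * q) ⊔ (q * a ⊔ q * q) := by rw [hdist, hdist]
          _ = (a * b ⊔ a * q) ⊔ (q * b ⊔ q * q) := by
              rw [mul_comm b a, mul_comm b q, mul_comm q a]
              exact sup_sup_sup_comm _ _ _ _
      rw [this]
      exact sup_le (sup_le h1 h2) (sup_le h3 h4)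
    by_cases hcase : (a ⊔ q) * (b ⊔ q) ≤ φ q
    · exact le_trans (hmono2 q (a ⊔ q) q (b ⊔ q) le_sup_right le_sup_right) hcase
    · rcases hq.2 (a ⊔ q) (b ⊔ q) hsup hcase with h | h
      · exact absurd (le_trans le_sup_left h) ha
      · exact absurd (le_trans le_sup_left h) hb
  -- conclude
  apply le_antisymm
  · apply _root_.sSup_le
    rintro x ⟨hx, n, hn, hxn⟩
    apply _root_.le_sSup
    refine ⟨hx, 2 * n, by omega, ?_⟩
    calc x ^ (2 * n) = x ^ n * x ^ n := by rw [two_mul, pow_add]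
      _ ≤ q * q := hmono2 _ _ _ _ hxn hxn
      _ ≤ φ q := hkey
  · exact sSup_le_sSup fun x ⟨hx, n, hn, hxn⟩ => ⟨hx, n, hn, le_trans hxn (hφ q)⟩
end

section
/- Let δ be an expansion function on L and φ : L → L a function with φ(a) ≤ a and φ(a) ≤ a³ for all a ∈ L. If a proper element q ∈ L is φ-δ-primary, then q is φ_n-δ-primary for every integer n ≥ 2. -/
open CompleteLattice

variable {L : Type*} [CompleteLattice L] [CommMonoid L]

theorem phi_le_cube_implies_phiN (hL : IsCGMultLattice L)
    (δ φ : L → L) (hδ : IsExpansion δ) (hφ : ∀ a : L, φ a ≤ a)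
    (hφ3 : ∀ a : L, φ a ≤ a ^ 3)
    (q : L) (hq : IsPhiDeltaPrimary φ δ q) :
    ∀ n : ℕ, 2 ≤ n → IsPhiDeltaPrimary (fun a : L => a ^ n) δ q := by
  obtain ⟨hdist, hone, -, -, -⟩ := hL
  obtain ⟨hδ1, hδ2⟩ := hδ
  have hsup : ∀ a x y : L, a * (x ⊔ y) = a * x ⊔ a * y := by
    intro a x y
    have h := hdist a {x, y}
    rw [sSup_pair] at h
    rw [h, iSup_pair]
  have hmul : ∀ a x y : L, x ≤ y → a * x ≤ a * y := by
    intro a x y hxy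
    have : a * (x ⊔ y) = a * x ⊔ a * y := hsup a x y
    rw [sup_eq_right.mpr hxy] at this
    rw [this]; exact le_sup_left
  have hmul' : ∀ a x y : L, x ≤ y → x * a ≤ y * a := by
    intro a x y hxy
    rw [mul_comm x a, mul_comm y a]; exact hmul a x y hxy
  have hle1 : ∀ x : L, x ≤ 1 := by intro x; rw [hone]; exact le_top
  by_cases hdp : ∀ a b : L, a * b ≤ q → a ≤ q ∨ b ≤ δ q
  · intro n _
    exact ⟨hq.1, fun a b hab _ => hdp a b hab⟩
  · push_neg at hdp
    obtain ⟨a, b, hab, ha, hb⟩ := hdp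
    -- q^2 ≤ φ q
    have haq : a * q ≤ q := by
      calc a * q ≤ 1 * q := hmul' q a 1 (hle1 a)
        _ = q := one_mul q
    have hbq : q * b ≤ q := by
      calc q * b ≤ q * 1 := hmul q b 1 (hle1 b)
        _ = q := mul_one q
    have h1 : a * q ≤ φ q := by
      have hle : a * (b ⊔ q) ≤ q := by
        rw [hsup]; exact sup_le hab haq
      have hφle : a * (b ⊔ q) ≤ φ q := by
        by_contra h
        rcases hq.2 a (b ⊔ q) hle h with h' | h'
        · exact ha h'
        · exact hb (le_trans le_sup_left h')
      exact le_trans (hmul a q (b ⊔ q) le_sup_right) hφle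
    have h2 : q * b ≤ φ q := by
      have hle : (a ⊔ q) * b ≤ q := by
        rw [mul_comm, hsup, mul_comm b a, mul_comm b q]
        exact sup_le hab hbq
      have hφle : (a ⊔ q) * b ≤ φ q := by
        by_contra h
        rcases hq.2 (a ⊔ q) b hle h with h' | h'
        · exact ha (le_trans le_sup_left h')
        · exact hb h'
      exact le_trans (hmul' b q (a ⊔ q) le_sup_right) hφle
    have hqq : q * q ≤ φ q := by
      have hle : (a ⊔ q) * (b ⊔ q) ≤ q := by
        rw [hsup]
        refine sup_le ?_ ?_
        · rw [mul_comm, hsup, mul_comm b a, mul_comm b q]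
          exact sup_le hab hbq
        · rw [mul_comm, hsup, mul_comm q a]
          exact sup_le haq (le_trans (hmul q q 1 (hle1 q)) (le_of_eq (mul_one q)))
      have hφle : (a ⊔ q) * (b ⊔ q) ≤ φ q := by
        by_contra h
        rcases hq.2 (a ⊔ q) (b ⊔ q) hle h with h' | h'
        · exact ha (le_trans le_sup_left h')
        · exact hb (le_trans le_sup_left h')
      calc q * q ≤ (a ⊔ q) * (b ⊔ q) := by
            exact le_trans (hmul q q (b ⊔ q) le_sup_right)
              (hmul' (b ⊔ q) q (a ⊔ q) le_sup_right)
        _ ≤ φ q := hφle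
    have hq2 : q ^ 2 ≤ φ q := by rw [sq]; exact hqq
    have hq23 : q ^ 2 ≤ q ^ 3 := le_trans hq2 (hφ3 q)
    have hkey : ∀ n : ℕ, 2 ≤ n → q ^ 2 ≤ q ^ n := by
      intro n hn
      induction n with
      | zero => omega
      | succ m ih =>
        rcases Nat.lt_or_ge m 2 with hm | hm
        · interval_cases m
          · omega
          · exact le_refl _
        · have := ih hm
          calc q ^ 2 ≤ q ^ 3 := hq23
            _ = q * q ^ 2 := by rw [pow_succ, mul_comm]
            _ ≤ q * q ^ m := hmul q _ _ this
            _ = q ^ (m + 1) := by rw [pow_succ, mul_comm]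
    have hφn : ∀ n : ℕ, 2 ≤ n → φ q ≤ q ^ n := by
      intro n hn
      calc φ q ≤ q ^ 3 := hφ3 q
        _ = q * q ^ 2 := by rw [pow_succ, mul_comm]
        _ ≤ q * q ^ n := hmul q _ _ (hkey n hn)
        _ = q ^ n * q := mul_comm _ _
        _ ≤ q ^ n * 1 := hmul _ q 1 (hle1 q)
        _ = q ^ n := mul_one _
    intro n hn
    refine ⟨hq.1, fun x y hxy hnxy => ?_⟩
    apply hq.2 x y hxy
    intro h
    exact hnxy (le_trans h (hφn n hn))
end

section
/- Let δ be an expansion function on L and φ : L → L a function with φ(a) ≤ a for all a ∈ L. Let p ∈ L be a φ-δ-primary element and q ∈ L with q ≰ p (so that (p : q) is proper). If (φ(p) : q) ≤ φ((p : q)), then (p : q) is φ-δ-primary. -/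
open CompleteLattice

variable {L : Type*} [CompleteLattice L] [CommMonoid L]

theorem residual_phiDeltaPrimary (hL : IsCGMultLattice L)
    (δ φ : L → L) (hδ : IsExpansion δ) (hφ : ∀ a : L, φ a ≤ a)
    (p : L) (hp : IsPhiDeltaPrimary φ δ p) (q : L) (hq : ¬ q ≤ p)
    (hres : lres (φ p) q ≤ φ (lres p q)) :
    IsPhiDeltaPrimary φ δ (lres p q) := by
  obtain ⟨hdist, hone, -, -, -⟩ := hL
  have hmono : ∀ a b c : L, b ≤ c → a * b ≤ a * c := by
    intro a b c hbc
    have h := hdist a {b, c}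
    rw [sSup_pair, sup_eq_right.mpr hbc] at h
    calc a * b ≤ ⨆ x ∈ ({b, c} : Set L), a * x := le_biSup _ (by simp)
      _ = a * c := h.symm
  have hRmul : lres p q * q ≤ p := by
    rw [lres, mul_comm, hdist q]
    exact iSup₂_le fun x hx => by rw [mul_comm]; exact hx
  have hle1 : lres p q ≤ 1 := hone ▸ le_top
  constructor
  · refine lt_of_le_of_ne hle1 fun h => hq ?_
    calc q = q * 1 := (mul_one q).symm
      _ = q * lres p q := by rw [h]
      _ = lres p q * q := mul_comm _ _
      _ ≤ p := hRmul
  · intro a b hab hnab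
    have habq : a * q * b ≤ p := by
      rw [mul_right_comm]
      calc a * b * q = q * (a * b) := mul_comm _ _
        _ ≤ q * lres p q := hmono q _ _ hab
        _ = lres p q * q := mul_comm _ _
        _ ≤ p := hRmul
    have hnphi : ¬ a * q * b ≤ φ p := by
      intro h
      apply hnab
      refine le_trans (le_sSup ?_) hres
      show a * b * q ≤ φ p
      rwa [mul_right_comm]
    rcases hp.2 (a * q) b habq hnphi with h | h
    · exact Or.inl (le_sSup h)
    · refine Or.inr (h.trans (hδ.2 p _ (le_sSup ?_)))
      show p * q ≤ p
      calc p * q ≤ p * 1 := hmono p _ _ (hone ▸ le_top)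
        _ = p := mul_one p
end

section
/- Let δ be an expansion function on L and φ : L → L a function with φ(a) ≤ a for all a ∈ L. If a proper element p ∈ L is φ-δ-primary and √(φ(p)) ≤ δ(p), then √p ≤ δ(p). -/
open CompleteLattice

variable {L : Type*} [CompleteLattice L] [CommMonoid L]

theorem radical_le_delta (hL : IsCGMultLattice L)
    (δ φ : L → L) (hδ : IsExpansion δ) (hφ : ∀ a : L, φ a ≤ a)
    (p : L) (hp : IsPhiDeltaPrimary φ δ p) (hrad : lradical (φ p) ≤ δ p) :
    lradical p ≤ δ p := by
  apply _root_.sSup_le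
  rintro x ⟨hc, n, hn, hxn⟩
  induction n with
  | zero => omega
  | succ n ih =>
    by_cases h : x ^ (n + 1) ≤ φ p
    · exact le_trans (le_sSup (show x ∈ {y : L | IsCompactElement y ∧ ∃ m : ℕ, 0 < m ∧ y ^ m ≤ φ p} from ⟨hc, n + 1, Nat.succ_pos n, h⟩)) hrad
    · rcases Nat.eq_zero_or_pos n with rfl | hn2
      · exact (show x ≤ p by simpa using hxn).trans (hδ.1 p)
      · rcases hp.2 (x ^ n) x (by rwa [← pow_succ]) (by rwa [← pow_succ]) with hxp | hxd
        · exact ih hn2 hxp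
        · exact hxd
end
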